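/- Let 𝒜 : ℤ^n → 𝒫(ℝ^d_{≥0}) be superadditive, let B ∈ ℤ^{n×n}, v ∈ ℤ^n, W ∈ ℝ^n, and for i = 1,…,k let κⁱ be Minkowski-additive, antitone functionals with κⁱ(∅) = +∞, hᵢ ∈ ℝ^n, δᵢ ∈ ℝ. Let {z̄ʲ}_{j∈J} ⊆ ℤ^n be a finite family with 𝒜(z̄ʲ) ≠ ∅ for all j ∈ J. If λ ∈ ℤ_{≥0}^J is not identically zero and satisfies Σ_{j∈J} λ_j (B z̄ʲ) = v and Σ_{j∈J} λ_j [κⁱ(𝒜(z̄ʲ)) + hᵢᵀ z̄ʲ] ≤ δᵢ for every i = 1,…,k, then the point z* = Σ_{j∈J} λ_j z̄ʲ satisfies: 𝒜(z*) ≠ ∅, B z* = v, κⁱ(𝒜(z*)) + hᵢᵀ z* ≤ δᵢ for every i, and the objective values agree: Wᵀ z* = Σ_{j∈J} λ_j (Wᵀ z̄ʲ). -/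

import Mathlib

open Pointwise
lemma decomp_nsmul {J : Type} [Fintype J] (lam : J → ℕ) (j₀ : J) (hj₀ : lam j₀ ≠ 0) :
    ∃ lam' : J → ℕ,
      (∀ (M : Type) [AddCommMonoid M] (f : J → M),
        ∑ j, lam j • f j = f j₀ + ∑ j, lam' j • f j) := by
  classical
  refine ⟨fun j => if j = j₀ then lam j - 1 else lam j, ?_⟩
  set lam' : J → ℕ := fun j => if j = j₀ then lam j - 1 else lam j with hlam'
  set ind : J → ℕ := fun j => if j = j₀ then 1 else 0 with hind
  have hpt : ∀ j, lam j = lam' j + ind j := by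
    intro j
    by_cases hj : j = j₀
    · subst hj; simp only [hlam', hind, if_pos rfl]; omega
    · simp only [hlam', hind, if_neg hj]; omega
  intro M _ f
  have hindsum : ∑ j, ind j • f j = f j₀ := by
    rw [Finset.sum_eq_single j₀]
    · simp [hind]
    · intro b _ hb; simp [hind, hb]
    · intro hmem; exact absurd (Finset.mem_univ j₀) hmem
  calc ∑ j, lam j • f j = ∑ j, (lam' j • f j + ind j • f j) := by
        refine Finset.sum_congr rfl fun j _ => ?_
        rw [hpt j, add_smul]
    _ = ∑ j, lam' j • f j + ∑ j, ind j • f j := Finset.sum_add_distrib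
    _ = f j₀ + ∑ j, lam' j • f j := by rw [hindsum]; exact add_comm _ _


section Aux

variable {n d k : ℕ} {J : Type} [Fintype J]
variable (𝒜 : (Fin n → ℤ) → Set (Fin d → ℝ))
variable (hApos : ∀ z, ∀ x ∈ 𝒜 z, ∀ i, 0 ≤ x i)
variable (hsuper : ∀ z₁ z₂ : Fin n → ℤ, 𝒜 z₁ + 𝒜 z₂ ⊆ 𝒜 (z₁ + z₂))
variable (κ : Fin k → Set (Fin d → ℝ) → WithTop ℝ)
variable (hκadd : ∀ (i : Fin k) (S T : Set (Fin d → ℝ)),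
      (∀ x ∈ S, ∀ j, 0 ≤ x j) → (∀ x ∈ T, ∀ j, 0 ≤ x j) →
      κ i (S + T) = κ i S + κ i T)
variable (hκanti : ∀ (i : Fin k) (S T : Set (Fin d → ℝ)),
      (∀ x ∈ S, ∀ j, 0 ≤ x j) → (∀ x ∈ T, ∀ j, 0 ≤ x j) →
      S ⊆ T → κ i T ≤ κ i S)

include hApos hsuper hκadd hκanti in
lemma two_step (z₁ z₂ : Fin n → ℤ) (h₁ : (𝒜 z₁).Nonempty) (h₂ : (𝒜 z₂).Nonempty) :
    (𝒜 (z₁ + z₂)).Nonempty ∧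
      ∀ i, κ i (𝒜 (z₁ + z₂)) ≤ κ i (𝒜 z₁) + κ i (𝒜 z₂) := by
  obtain ⟨x, hx⟩ := h₁
  obtain ⟨y, hy⟩ := h₂
  have hmem : x + y ∈ 𝒜 z₁ + 𝒜 z₂ := Set.add_mem_add hx hy
  have hpos : ∀ w ∈ 𝒜 z₁ + 𝒜 z₂, ∀ j, 0 ≤ w j := by
    rintro w ⟨a, ha, b, hb, rfl⟩ j
    exact add_nonneg (hApos _ _ ha j) (hApos _ _ hb j)
  refine ⟨⟨x + y, hsuper _ _ hmem⟩, fun i => ?_⟩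
  calc κ i (𝒜 (z₁ + z₂)) ≤ κ i (𝒜 z₁ + 𝒜 z₂) :=
        hκanti i _ _ hpos (hApos _) (hsuper _ _)
    _ = κ i (𝒜 z₁) + κ i (𝒜 z₂) := hκadd i _ _ (hApos _) (hApos _)

include hApos hsuper hκadd hκanti in
lemma aux_step (zbar : J → Fin n → ℤ) (hzbar : ∀ j, (𝒜 (zbar j)).Nonempty) :
    ∀ (m : ℕ) (lam : J → ℕ), ∑ j, lam j = m →
      ∀ z : Fin n → ℤ, (𝒜 z).Nonempty →
        (𝒜 (z + ∑ j, lam j • zbar j)).Nonempty ∧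
          ∀ i, κ i (𝒜 (z + ∑ j, lam j • zbar j)) ≤
            κ i (𝒜 z) + ∑ j, lam j • κ i (𝒜 (zbar j)) := by
  classical
  intro m
  induction m with
  | zero =>
    intro lam hsum z hz
    have hall : ∀ j, lam j = 0 := by
      intro j
      have := (Finset.sum_eq_zero_iff.mp hsum) j (Finset.mem_univ j)
      exact this
    simp only [hall, zero_smul, Finset.sum_const_zero, add_zero]
    exact ⟨hz, fun i => le_refl _⟩
  | succ m ih =>
    intro lam hsum z hz
    have hex : ∃ j₀, lam j₀ ≠ 0 := by
      by_contra hc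
      push_neg at hc
      simp [hc] at hsum
    obtain ⟨j₀, hj₀⟩ := hex
    set lam' : J → ℕ := fun j => if j = j₀ then lam j - 1 else lam j with hlam'
    set ind : J → ℕ := fun j => if j = j₀ then 1 else 0 with hind
    have hpt : ∀ j, lam j = lam' j + ind j := by
      intro j
      by_cases hj : j = j₀
      · subst hj
        simp only [hlam', hind, if_pos rfl]
        omega
      · simp only [hlam', hind, if_neg hj]
        omega
    have hindsum : ∀ (M : Type) [AddCommMonoid M] (f : J → M),
        ∑ j, ind j • f j = f j₀ := by
      intro M _ f
      rw [Finset.sum_eq_single j₀]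
      · simp [hind]
      · intro b _ hb; simp [hind, hb]
      · intro hmem; exact absurd (Finset.mem_univ j₀) hmem
    have hdecomp : ∀ (M : Type) [AddCommMonoid M] (f : J → M),
        ∑ j, lam j • f j = f j₀ + ∑ j, lam' j • f j := by
      intro M _ f
      calc ∑ j, lam j • f j = ∑ j, (lam' j • f j + ind j • f j) := by
            refine Finset.sum_congr rfl fun j _ => ?_
            rw [hpt j, add_smul]
        _ = ∑ j, lam' j • f j + ∑ j, ind j • f j := Finset.sum_add_distrib
        _ = f j₀ + ∑ j, lam' j • f j := by rw [hindsum]; exact add_comm _ _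
    have hsum' : ∑ j, lam' j = m := by
      have key : ∑ j, lam j = (∑ j, lam' j) + (∑ j, ind j) := by
        rw [← Finset.sum_add_distrib]
        exact Finset.sum_congr rfl fun j _ => hpt j
      have hone : ∑ j, ind j = 1 := by
        have := hindsum ℕ (fun _ => 1)
        simpa using this
      omega
    have hz' : (𝒜 (z + zbar j₀)).Nonempty :=
      (two_step 𝒜 hApos hsuper κ hκadd hκanti z (zbar j₀) hz (hzbar j₀)).1
    obtain ⟨hne, hle⟩ := ih lam' hsum' (z + zbar j₀) hz'
    have heq : z + zbar j₀ + ∑ j, lam' j • zbar j = z + ∑ j, lam j • zbar j := by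
      rw [hdecomp]; abel
    rw [heq] at hne hle
    refine ⟨hne, fun i => ?_⟩
    calc κ i (𝒜 (z + ∑ j, lam j • zbar j))
        ≤ κ i (𝒜 (z + zbar j₀)) + ∑ j, lam' j • κ i (𝒜 (zbar j)) := hle i
      _ ≤ (κ i (𝒜 z) + κ i (𝒜 (zbar j₀))) + ∑ j, lam' j • κ i (𝒜 (zbar j)) := by
          exact add_le_add_left
            ((two_step 𝒜 hApos hsuper κ hκadd hκanti z (zbar j₀) hz (hzbar j₀)).2 i) _
      _ = κ i (𝒜 z) + ∑ j, lam j • κ i (𝒜 (zbar j)) := by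
          rw [hdecomp (WithTop ℝ) (fun j => κ i (𝒜 (zbar j)))]
          rw [add_assoc]

include hApos hsuper hκadd hκanti in
lemma aux_main (zbar : J → Fin n → ℤ) (hzbar : ∀ j, (𝒜 (zbar j)).Nonempty)
    (lam : J → ℕ) (hlam : lam ≠ 0) :
    (𝒜 (∑ j, lam j • zbar j)).Nonempty ∧
      ∀ i, κ i (𝒜 (∑ j, lam j • zbar j)) ≤ ∑ j, lam j • κ i (𝒜 (zbar j)) := by
  have hex : ∃ j₀, lam j₀ ≠ 0 := by
    by_contra hc
    push_neg at hc
    exact hlam (funext hc)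
  obtain ⟨j₀, hj₀⟩ := hex
  obtain ⟨lam', hdecomp⟩ := decomp_nsmul lam j₀ hj₀
  obtain ⟨hne, hle⟩ := aux_step 𝒜 hApos hsuper κ hκadd hκanti zbar hzbar
    (∑ j, lam' j) lam' rfl (zbar j₀) (hzbar j₀)
  have heq : zbar j₀ + ∑ j, lam' j • zbar j = ∑ j, lam j • zbar j :=
    (hdecomp (Fin n → ℤ) zbar).symm
  rw [heq] at hne hle
  refine ⟨hne, fun i => ?_⟩
  calc κ i (𝒜 (∑ j, lam j • zbar j))
      ≤ κ i (𝒜 (zbar j₀)) + ∑ j, lam' j • κ i (𝒜 (zbar j)) := hle i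
    _ = ∑ j, lam j • κ i (𝒜 (zbar j)) := (hdecomp (WithTop ℝ) (fun j => κ i (𝒜 (zbar j)))).symm

end Aux

/-- Theorem (IP ↔ IMP), first direction: a feasible solution `λ` of the integer linear
program gives a feasible solution `z* = Σ_j λ_j z̄ʲ` of the (mixed-)integer Minkowski
program, with the same objective value. -/
theorem imp_of_ip_feasible
    {n d k : ℕ} {J : Type} [Fintype J]
    -- the superadditive set-valued map with values in the nonnegative orthant of ℝ^d
    (𝒜 : (Fin n → ℤ) → Set (Fin d → ℝ))
    (hApos : ∀ z, ∀ x ∈ 𝒜 z, ∀ i, 0 ≤ x i)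
    (hsuper : ∀ z₁ z₂ : Fin n → ℤ, 𝒜 z₁ + 𝒜 z₂ ⊆ 𝒜 (z₁ + z₂))
    (B : Matrix (Fin n) (Fin n) ℤ) (v : Fin n → ℤ) (W : Fin n → ℝ)
    -- the functionals κⁱ, with values in ℝ ∪ {+∞}
    (κ : Fin k → Set (Fin d → ℝ) → WithTop ℝ)
    (hκempty : ∀ i, κ i ∅ = ⊤)
    -- Minkowski-additivity on subsets of the nonnegative orthant
    (hκadd : ∀ (i : Fin k) (S T : Set (Fin d → ℝ)),
      (∀ x ∈ S, ∀ j, 0 ≤ x j) → (∀ x ∈ T, ∀ j, 0 ≤ x j) →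
      κ i (S + T) = κ i S + κ i T)
    -- antitonicity on subsets of the nonnegative orthant
    (hκanti : ∀ (i : Fin k) (S T : Set (Fin d → ℝ)),
      (∀ x ∈ S, ∀ j, 0 ≤ x j) → (∀ x ∈ T, ∀ j, 0 ≤ x j) →
      S ⊆ T → κ i T ≤ κ i S)
    (h : Fin k → Fin n → ℝ) (δ : Fin k → ℝ)
    -- the finite family {z̄ʲ} with 𝒜(z̄ʲ) ≠ ∅
    (zbar : J → Fin n → ℤ) (hzbar : ∀ j, (𝒜 (zbar j)).Nonempty)
    -- a not identically zero feasible solution of the integer linear program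
    (lam : J → ℕ) (hlam : lam ≠ 0)
    (hB : ∑ j, lam j • B.mulVec (zbar j) = v)
    (hineq : ∀ i : Fin k,
      ∑ j, lam j • (κ i (𝒜 (zbar j)) + ((∑ l, h i l * (zbar j l : ℝ)) : WithTop ℝ))
        ≤ ((δ i : ℝ) : WithTop ℝ))
    (zstar : Fin n → ℤ) (hzstar : zstar = ∑ j, lam j • zbar j) :
    (𝒜 zstar).Nonempty ∧
    B.mulVec zstar = v ∧
    (∀ i : Fin k,
      κ i (𝒜 zstar) + ((∑ l, h i l * (zstar l : ℝ)) : WithTop ℝ) ≤ ((δ i : ℝ) : WithTop ℝ)) ∧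
    (∑ l, W l * (zstar l : ℝ)) = ∑ j, (lam j : ℝ) * ∑ l, W l * (zbar j l : ℝ) := by
  
  obtain ⟨hne, hle⟩ := aux_main 𝒜 hApos hsuper κ hκadd hκanti zbar hzbar lam hlam
  rw [← hzstar] at hne hle
  -- general objective computation
  have key : ∀ w : Fin n → ℝ,
      ∑ l, w l * (zstar l : ℝ) = ∑ j, (lam j : ℝ) * ∑ l, w l * (zbar j l : ℝ) := by
    intro w
    have : ∀ l, ((zstar l : ℤ) : ℝ) = ∑ j, (lam j : ℝ) * (zbar j l : ℝ) := by
      intro l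
      rw [hzstar]
      rw [Finset.sum_apply]
      simp only [Pi.smul_apply, nsmul_eq_mul, Pi.mul_apply]
      push_cast
      rfl
    simp only [this, Finset.mul_sum]
    rw [Finset.sum_comm]
    refine Finset.sum_congr rfl fun j _ => Finset.sum_congr rfl fun l _ => by ring
  have hBv : B.mulVec zstar = v := by
    rw [← hB, hzstar]
    ext i
    simp only [Matrix.mulVec, dotProduct, Finset.sum_apply, Pi.smul_apply,
      nsmul_eq_mul, Pi.mul_apply, Pi.natCast_apply, smul_eq_mul, Finset.mul_sum]
    rw [Finset.sum_comm]
    refine Finset.sum_congr rfl fun j _ => Finset.sum_congr rfl fun l _ => by push_cast; ring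
  refine ⟨hne, hBv, fun i => ?_, key W⟩
  -- inequality
  have hS : ∀ (z : Fin n → ℤ),
      (∑ l, ((h i l : WithTop ℝ)) * (((z l : ℝ) : WithTop ℝ)))
        = (((∑ l, h i l * (z l : ℝ)) : ℝ) : WithTop ℝ) := by
    intro z
    push_cast
    rfl
  have hcoe : (((∑ l, h i l * (zstar l : ℝ)) : ℝ) : WithTop ℝ)
      = ∑ j, lam j • (((∑ l, h i l * (zbar j l : ℝ)) : ℝ) : WithTop ℝ) := by
    rw [key (h i), WithTop.coe_sum]
    refine Finset.sum_congr rfl fun j _ => ?_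
    rw [← WithTop.coe_nsmul, nsmul_eq_mul]
  calc κ i (𝒜 zstar) + ((∑ l, h i l * (zstar l : ℝ)) : WithTop ℝ)
      = κ i (𝒜 zstar) + (((∑ l, h i l * (zstar l : ℝ)) : ℝ) : WithTop ℝ) := by rw [hS]
    _ ≤ (∑ j, lam j • κ i (𝒜 (zbar j)))
        + ∑ j, lam j • (((∑ l, h i l * (zbar j l : ℝ)) : ℝ) : WithTop ℝ) := by
        rw [hcoe]
        exact add_le_add_left (hle i) _
    _ = ∑ j, lam j • (κ i (𝒜 (zbar j)) + (((∑ l, h i l * (zbar j l : ℝ)) : ℝ) : WithTop ℝ)) := by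
        rw [← Finset.sum_add_distrib]
        exact Finset.sum_congr rfl fun j _ => (smul_add _ _ _).symm
    _ = ∑ j, lam j • (κ i (𝒜 (zbar j)) + ((∑ l, h i l * (zbar j l : ℝ)) : WithTop ℝ)) := by
        refine Finset.sum_congr rfl fun j _ => ?_
        rw [hS]
    _ ≤ ((δ i : ℝ) : WithTop ℝ) := hineq i
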